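/- On the set of independent sets of the 4-cycle C₄, among all probability distributions whose four vertex marginals all equal s (0 < s < 1/2), the product-form distribution b(x) = λ^{∑x_i}/Z with λ = (−1+4s+√(1−4s+8s²))/(2−4s) uniquely maximizes entropy. -/

import Mathlib

lemma gibbs_term (x c : ℝ) (hx : 0 ≤ x) (hc : 0 < c) :
    x - c ≤ x * Real.log x - x * Real.log c := by
  rcases eq_or_lt_of_le hx with h | h
  · simp [← h]; linarith
  · have h1 := Real.log_le_sub_one_of_pos (div_pos hc h)
    rw [Real.log_div hc.ne' h.ne'] at h1
    have h2 : x * (Real.log c - Real.log x) ≤ x * (c / x - 1) :=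
      mul_le_mul_of_nonneg_left h1 h.le
    have h3 : x * (c / x - 1) = c - x := by field_simp
    rw [h3, mul_sub] at h2
    linarith

lemma gibbs_term_strict (x c : ℝ) (hx : 0 ≤ x) (hc : 0 < c) (hne : x ≠ c) :
    x - c < x * Real.log x - x * Real.log c := by
  rcases eq_or_lt_of_le hx with h | h
  · simp [← h]; linarith
  · have hne1 : c / x ≠ 1 := fun hh => hne ((div_eq_one_iff_eq h.ne').mp hh).symm
    have h1 := Real.log_lt_sub_one_of_pos (div_pos hc h) hne1
    rw [Real.log_div hc.ne' h.ne'] at h1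
    have h2 : x * (Real.log c - Real.log x) < x * (c / x - 1) :=
      (mul_lt_mul_iff_right₀ h).mpr h1
    have h3 : x * (c / x - 1) = c - x := by field_simp
    rw [h3, mul_sub] at h2
    linarith

lemma gibbs_aux {α : Type*} (t : Finset α) (b c : α → ℝ)
    (hb : ∀ S ∈ t, 0 ≤ b S) (hc : ∀ S ∈ t, 0 < c S)
    (hsb : ∑ S ∈ t, b S = 1) (hsc : ∑ S ∈ t, c S = 1)
    (hne : ∃ S ∈ t, b S ≠ c S) :
    ∑ S ∈ t, b S * Real.log (c S) < ∑ S ∈ t, b S * Real.log (b S) := by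
  have key : ∑ S ∈ t, (b S - c S) <
      ∑ S ∈ t, (b S * Real.log (b S) - b S * Real.log (c S)) := by
    obtain ⟨S0, hS0t, hS0⟩ := hne
    exact Finset.sum_lt_sum (fun i hi => gibbs_term _ _ (hb i hi) (hc i hi))
      ⟨S0, hS0t, gibbs_term_strict _ _ (hb S0 hS0t) (hc S0 hS0t) hS0⟩
  rw [Finset.sum_sub_distrib, Finset.sum_sub_distrib, hsb, hsc] at key
  linarith

lemma sum7 (f : Finset (Fin 4) → ℝ) :
    ∑ S ∈ ({∅, {0}, {1}, {2}, {3}, {0,2}, {1,3}} : Finset (Finset (Fin 4))), f S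
      = f ∅ + f {0} + f {1} + f {2} + f {3} + f {0,2} + f {1,3} := by
  rw [Finset.sum_insert (by decide), Finset.sum_insert (by decide),
    Finset.sum_insert (by decide), Finset.sum_insert (by decide),
    Finset.sum_insert (by decide), Finset.sum_insert (by decide),
    Finset.sum_singleton]
  ring

open Classical in
/-- Among all distributions over the independent sets of the 4-cycle whose four
vertex marginals all equal `s` (with `0 < s < 1/2`), the product-form distribution
`b(x) = λ^{∑x}/Z` with `λ = (−1+4s+√(1−4s+8s²))/(2−4s)` uniquely maximizes entropy. -/
theorem stmt_11 (s : ℝ) (h0 : 0 < s) (h1 : s < 1 / 2) :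
    let lam := (-1 + 4 * s + Real.sqrt (1 - 4 * s + 8 * s ^ 2)) / (2 - 4 * s)
    let Z := 1 + 4 * lam + 2 * lam ^ 2
    let Indep := Finset.univ.filter
      (fun S : Finset (Fin 4) => ∀ i ∈ S, ∀ j ∈ S, ¬ (j = i + 1 ∨ i = j + 1))
    let bstar : Finset (Fin 4) → ℝ := fun S => if S ∈ Indep then lam ^ S.card / Z else 0
    let P : (Finset (Fin 4) → ℝ) → Prop := fun b =>
      (∀ S, 0 ≤ b S) ∧ (∀ S, S ∉ Indep → b S = 0) ∧
      (∑ S : Finset (Fin 4), b S = 1) ∧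
      (∀ i : Fin 4, ∑ S ∈ Indep.filter (fun S => i ∈ S), b S = s)
    let H : (Finset (Fin 4) → ℝ) → ℝ := fun b => -∑ S : Finset (Fin 4), b S * Real.log (b S)
    P bstar ∧ ∀ b, P b → b ≠ bstar → H b < H bstar := by
  intro lam Z Indep bstar P H
  -- basic analytic facts
  have hs2 : (0:ℝ) < 1 - 2*s := by linarith
  have hD : (0:ℝ) < 1 - 4*s + 8*s^2 := by nlinarith
  have hr2 : (Real.sqrt (1 - 4*s + 8*s^2))^2 = 1 - 4*s + 8*s^2 := Real.sq_sqrt hD.le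
  have hrpos : 0 < Real.sqrt (1 - 4*s + 8*s^2) := Real.sqrt_pos.mpr hD
  set r := Real.sqrt (1 - 4*s + 8*s^2) with hr_def
  have hrgt : 1 - 4*s < r := by
    rcases le_or_gt (1 - 4*s) 0 with h | h
    · linarith
    · nlinarith
  have hlam_def : lam = (-1 + 4*s + r) / (2 - 4*s) := by
    unfold lam; rw [hr_def]
  have hlam_pos : 0 < lam := by
    rw [hlam_def]; apply div_pos <;> linarith
  have hlam_mul : (2 - 4*s) * lam = -1 + 4*s + r := by
    rw [hlam_def, mul_div_cancel₀ _ (by linarith : (2:ℝ) - 4*s ≠ 0)]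
  have hquad : lam + lam^2 = s * (1 + 4*lam + 2*lam^2) := by
    have h2 : ((2 - 4*s)*lam)^2 = (-1 + 4*s + r)^2 := by rw [hlam_mul]
    nlinarith [h2, hr2, hlam_mul, sq_nonneg lam]
  have hZdef : Z = 1 + 4*lam + 2*lam^2 := rfl
  have hbstar_eq : ∀ S, bstar S = if S ∈ Indep then lam ^ S.card / Z else 0 := fun _ => rfl
  have hH_eq : ∀ b : Finset (Fin 4) → ℝ, H b = -∑ S : Finset (Fin 4), b S * Real.log (b S) :=
    fun _ => rfl
  have hZpos : 0 < Z := by rw [hZdef]; positivity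
  -- combinatorial facts
  have hIndep : Indep = ({∅, {0}, {1}, {2}, {3}, {0,2}, {1,3}} : Finset (Finset (Fin 4))) := by
    unfold Indep; decide
  have hf0 : Indep.filter (fun S => (0:Fin 4) ∈ S) = {{0},{0,2}} := by
    rw [hIndep]; decide
  have hf1 : Indep.filter (fun S => (1:Fin 4) ∈ S) = {{1},{1,3}} := by
    rw [hIndep]; decide
  have hf2 : Indep.filter (fun S => (2:Fin 4) ∈ S) = {{2},{0,2}} := by
    rw [hIndep]; decide
  have hf3 : Indep.filter (fun S => (3:Fin 4) ∈ S) = {{3},{1,3}} := by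
    rw [hIndep]; decide
  -- bstar values
  have hvanish : ∀ S, S ∉ Indep → bstar S = 0 := by
    intro S hS; rw [hbstar_eq S, if_neg hS]
  have hbE : bstar ∅ = 1 / Z := by
    rw [hbstar_eq, if_pos (by rw [hIndep]; decide)]; simp
  have hb0 : bstar {0} = lam / Z := by
    rw [hbstar_eq, if_pos (by rw [hIndep]; decide)]; simp
  have hb1' : bstar {1} = lam / Z := by
    rw [hbstar_eq, if_pos (by rw [hIndep]; decide)]; simp
  have hb2' : bstar {2} = lam / Z := by
    rw [hbstar_eq, if_pos (by rw [hIndep]; decide)]; simp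
  have hb3' : bstar {3} = lam / Z := by
    rw [hbstar_eq, if_pos (by rw [hIndep]; decide)]; simp
  have hb02 : bstar {0,2} = lam^2 / Z := by
    rw [hbstar_eq, if_pos (by rw [hIndep]; decide)]
    norm_num [show ({0,2} : Finset (Fin 4)).card = 2 from by decide]
  have hb13 : bstar {1,3} = lam^2 / Z := by
    rw [hbstar_eq, if_pos (by rw [hIndep]; decide)]
    norm_num [show ({1,3} : Finset (Fin 4)).card = 2 from by decide]
  -- restricting sums to Indep
  have hsum_ext : ∀ (b : Finset (Fin 4) → ℝ), (∀ S, S ∉ Indep → b S = 0) →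
      (∑ S ∈ Indep, b S = ∑ S : Finset (Fin 4), b S) ∧
      (∑ S ∈ Indep, b S * Real.log (b S) = ∑ S : Finset (Fin 4), b S * Real.log (b S)) := by
    intro b hb
    constructor <;> apply Finset.sum_subset (Finset.subset_univ _) <;>
      intro x _ hx <;> simp [hb x hx]
  -- cross entropy computation
  have hC : ∀ b : Finset (Fin 4) → ℝ, P b →
      ∑ S ∈ Indep, b S * Real.log (bstar S) = 4*s*Real.log lam - Real.log Z := by
    intro b hb
    obtain ⟨hbnn, hbv, hbs, hbm⟩ := hb
    have hm0 := hbm 0; have hm1 := hbm 1; have hm2 := hbm 2; have hm3 := hbm 3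
    rw [hf0, Finset.sum_insert (by decide), Finset.sum_singleton] at hm0
    rw [hf1, Finset.sum_insert (by decide), Finset.sum_singleton] at hm1
    rw [hf2, Finset.sum_insert (by decide), Finset.sum_singleton] at hm2
    rw [hf3, Finset.sum_insert (by decide), Finset.sum_singleton] at hm3
    have hsb : b ∅ + b {0} + b {1} + b {2} + b {3} + b {0,2} + b {1,3} = 1 := by
      rw [← sum7, ← hIndep, (hsum_ext b hbv).1]; exact hbs
    rw [hIndep, sum7, hbE, hb0, hb1', hb2', hb3', hb02, hb13,
      Real.log_div one_ne_zero hZpos.ne', Real.log_div hlam_pos.ne' hZpos.ne',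
      Real.log_div (pow_ne_zero 2 hlam_pos.ne') hZpos.ne', Real.log_one, Real.log_pow]
    push_cast
    linear_combination Real.log lam * hm0 + Real.log lam * hm1 + Real.log lam * hm2 +
      Real.log lam * hm3 - Real.log Z * hsb
  -- P bstar
  have hPbstar : P bstar := by
    refine ⟨?_, hvanish, ?_, ?_⟩
    · intro S; rw [hbstar_eq S]
      split
      · positivity
      · exact le_rfl
    · rw [← (hsum_ext bstar hvanish).1, hIndep, sum7, hbE, hb0, hb1', hb2', hb3', hb02, hb13]
      field_simp
      rw [hZdef]; ring
    · intro i
      have hi := (by decide : ∀ j : Fin 4, j = 0 ∨ j = 1 ∨ j = 2 ∨ j = 3) i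
      rcases hi with rfl | rfl | rfl | rfl
      · rw [hf0, Finset.sum_insert (by decide), Finset.sum_singleton, hb0, hb02,
          ← add_div, div_eq_iff hZpos.ne', hZdef]
        linarith [hquad]
      · rw [hf1, Finset.sum_insert (by decide), Finset.sum_singleton, hb1', hb13,
          ← add_div, div_eq_iff hZpos.ne', hZdef]
        linarith [hquad]
      · rw [hf2, Finset.sum_insert (by decide), Finset.sum_singleton, hb2', hb02,
          ← add_div, div_eq_iff hZpos.ne', hZdef]
        linarith [hquad]
      · rw [hf3, Finset.sum_insert (by decide), Finset.sum_singleton, hb3', hb13,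
          ← add_div, div_eq_iff hZpos.ne', hZdef]
        linarith [hquad]
  refine ⟨hPbstar, ?_⟩
  intro b hPb hne
  have hbnn := hPb.1
  have hbv := hPb.2.1
  have hbs := hPb.2.2.1
  have hcpos : ∀ S ∈ Indep, 0 < bstar S := by
    intro S hS; rw [hbstar_eq S, if_pos hS]; positivity
  have hsb : ∑ S ∈ Indep, b S = 1 := by rw [(hsum_ext b hbv).1]; exact hbs
  have hsc : ∑ S ∈ Indep, bstar S = 1 := by
    rw [(hsum_ext bstar hvanish).1]; exact hPbstar.2.2.1
  have hexists : ∃ S ∈ Indep, b S ≠ bstar S := by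
    by_contra h
    push_neg at h
    apply hne
    funext S
    by_cases hS : S ∈ Indep
    · exact h S hS
    · rw [hbv S hS, hvanish S hS]
  have hgibbs := gibbs_aux Indep b bstar (fun S _ => hbnn S) hcpos hsb hsc hexists
  have hHb : H b = -∑ S ∈ Indep, b S * Real.log (b S) := by
    rw [hH_eq, (hsum_ext b hbv).2]
  have hHc : H bstar = -(4*s*Real.log lam - Real.log Z) := by
    rw [hH_eq, ← (hsum_ext bstar hvanish).2, hC bstar hPbstar]
  have hcross := hC b hPb
  rw [hHb, hHc, ← hcross]
  linarith [hgibbs]
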